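/- For every formula A ⊆ M and every finite set Δ of formulas with ⟦Δ⟧_pam ≠ ∅: lim_{μ→1⁻} P_μ(A | Δ) = 1 if and only if ⟦S⟧_p ⊆ ⟦A⟧_p for every cardinality-maximal possible subset S of Δ (i.e. A is a consequence of every S ∈ MPS(Δ)). -/

import Mathlib

open Classical

noncomputable section

variable {M : Type*}

/-- Likelihood of a formula (a set of models) in a model. -/
noncomputable def ell (μ : ℝ) (B : Set M) (m : M) : ℝ :=
  if m ∈ B then μ else 1 - μ

/-- Joint likelihood of a finite set of formulas in a model. -/
noncomputable def ellS (μ : ℝ) (Δ : Finset (Set M)) (m : M) : ℝ :=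
  ∏ B ∈ Δ, ell μ B m

/-- Conditional probability P_μ(A | Δ) of the generative logic model. -/
noncomputable def condP [Fintype M] (p : M → ℝ) (μ : ℝ) (A : Set M)
    (Δ : Finset (Set M)) : ℝ :=
  (∑ m, ell μ A m * ellS μ Δ m * p m) / (∑ m, ellS μ Δ m * p m)

/-- Models of a finite set of formulas. -/
def Mdl (Δ : Finset (Set M)) : Set M := {m | ∀ B ∈ Δ, m ∈ B}

/-- Possible models of a finite set of formulas. -/
def PMod (p : M → ℝ) (Δ : Finset (Set M)) : Set M :=
  {m | (∀ B ∈ Δ, m ∈ B) ∧ p m ≠ 0}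

/-- Possible models of a single formula. -/
def PModA (p : M → ℝ) (A : Set M) : Set M := {m | m ∈ A ∧ p m ≠ 0}

/-- S is a maximal consistent subset of Δ. -/
def IsMaxConsistent (Δ S : Finset (Set M)) : Prop :=
  S ⊆ Δ ∧ Mdl S ≠ ∅ ∧ ∀ B ∈ Δ \ S, Mdl (insert B S) = ∅

/-- Cardinality-maximal consistent subsets of Δ. -/
def MCS (Δ : Finset (Set M)) : Set (Finset (Set M)) :=
  {S | IsMaxConsistent Δ S ∧ ∀ S', IsMaxConsistent Δ S' → S'.card ≤ S.card}

/-- Approximate models of Δ. -/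
def AMod (Δ : Finset (Set M)) : Set M := ⋃ S ∈ MCS Δ, Mdl S

/-- S is a maximal possible subset of Δ (w.r.t. p). -/
def IsMaxPossible (p : M → ℝ) (Δ S : Finset (Set M)) : Prop :=
  S ⊆ Δ ∧ PMod p S ≠ ∅ ∧ ∀ B ∈ Δ \ S, PMod p (insert B S) = ∅

/-- Cardinality-maximal possible subsets of Δ. -/
def MPS (p : M → ℝ) (Δ : Finset (Set M)) : Set (Finset (Set M)) :=
  {S | IsMaxPossible p Δ S ∧ ∀ S', IsMaxPossible p Δ S' → S'.card ≤ S.card}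

/-- Possible approximate models of Δ. -/
def PAMod (p : M → ℝ) (Δ : Finset (Set M)) : Set M := ⋃ S ∈ MPS p Δ, PMod p S


private lemma ellS_eq (μ : ℝ) (Δ : Finset (Set M)) (m : M) :
    ellS μ Δ m =
      μ ^ (Δ.filter (fun B => m ∈ B)).card *
        (1 - μ) ^ (Δ.card - (Δ.filter (fun B => m ∈ B)).card) := by
  classical
  rw [ellS, ← Finset.prod_filter_mul_prod_filter_not Δ (fun B => m ∈ B)]
  have h1 : ∏ B ∈ Δ.filter (fun B => m ∈ B), ell μ B m
      = μ ^ (Δ.filter (fun B => m ∈ B)).card :=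
    Finset.prod_eq_pow_card (fun B hB => by
      simp only [Finset.mem_filter] at hB; simp [ell, hB.2])
  have h2 : ∏ B ∈ Δ.filter (fun B => ¬ m ∈ B), ell μ B m
      = (1 - μ) ^ (Δ.filter (fun B => ¬ m ∈ B)).card :=
    Finset.prod_eq_pow_card (fun B hB => by
      simp only [Finset.mem_filter] at hB; simp [ell, hB.2])
  rw [h1, h2]
  congr 1
  rw [Finset.filter_not, Finset.card_sdiff_of_subset (Finset.filter_subset _ _)]

/-- the μ → 1⁻ limit of the conditional probability is 1 iff
A is a consequence of every cardinality-maximal possible subset of Δ. -/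
theorem stmt_14 [Fintype M] [Nonempty M] (p : M → ℝ)
    (hp : ∀ m, 0 ≤ p m) (hps : ∑ m, p m = 1)
    (A : Set M) (Δ : Finset (Set M)) (h : PAMod p Δ ≠ ∅) :
    Filter.Tendsto (fun μ => condP p μ A Δ)
        (nhdsWithin 1 (Set.Ico (0 : ℝ) 1)) (nhds 1) ↔
      ∀ S ∈ MPS p Δ, PMod p S ⊆ PModA p A := by
  classical
  -- notation
  set L := nhdsWithin (1:ℝ) (Set.Ico 0 1) with hL
  set k : M → ℕ := fun m => (Δ.filter (fun B => m ∈ B)).card with hkdef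
  set d : ℕ := Δ.card with hd
  have hkd : ∀ m, k m ≤ d := fun m => Finset.card_le_card (Finset.filter_subset _ _)
  set supp : Finset M := Finset.univ.filter (fun m => p m ≠ 0) with hsupp
  -- PAMod nonempty gives some possible model
  obtain ⟨m₀, hm₀⟩ := Set.nonempty_iff_ne_empty.mpr h
  simp only [PAMod, Set.mem_iUnion] at hm₀
  obtain ⟨S₀, hS₀, hm₀S⟩ := hm₀
  have hsupp_ne : supp.Nonempty := ⟨m₀, by simp [hsupp, hm₀S.2]⟩
  set K : ℕ := supp.sup k with hK
  have hkK : ∀ m, p m ≠ 0 → k m ≤ K :=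
    fun m hm => Finset.le_sup (by simp [hsupp, hm])
  have hKd : K ≤ d := Finset.sup_le fun m _ => hkd m
  obtain ⟨mK, hmKs, hmKeq⟩ := Finset.exists_mem_eq_sup supp hsupp_ne k
  have hmKp : p mK ≠ 0 := by simpa [hsupp] using hmKs
  have hmKK : k mK = K := hmKeq.symm
  -- the filter set of m
  have hmemSm : ∀ m : M, m ∈ PMod p (Δ.filter (fun B => m ∈ B)) ↔ p m ≠ 0 := by
    intro m
    constructor
    · exact fun hm => hm.2
    · intro hm
      exact ⟨fun B hB => (Finset.mem_filter.mp hB).2, hm⟩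
  -- any possible subset has card ≤ K
  have hPoss : ∀ S : Finset (Set M), S ⊆ Δ → PMod p S ≠ ∅ → S.card ≤ K := by
    intro S hSΔ hS
    obtain ⟨m, hm⟩ := Set.nonempty_iff_ne_empty.mpr hS
    have hsub : S ⊆ Δ.filter (fun B => m ∈ B) := fun B hB =>
      Finset.mem_filter.mpr ⟨hSΔ hB, hm.1 B hB⟩
    exact le_trans (Finset.card_le_card hsub) (hkK m hm.2)
  -- top-count models give MPS members
  have hC : ∀ m, p m ≠ 0 → k m = K → (Δ.filter (fun B => m ∈ B)) ∈ MPS p Δ := by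
    intro m hpm hkm
    have hmp : ∀ S', IsMaxPossible p Δ S' → S'.card ≤ K :=
      fun S' hS' => hPoss S' hS'.1 hS'.2.1
    refine ⟨⟨Finset.filter_subset _ _,
      Set.Nonempty.ne_empty ⟨m, (hmemSm m).mpr hpm⟩, ?_⟩, fun S' hS' => ?_⟩
    swap
    · have hcard : S'.card ≤ k m := by rw [hkm]; exact hmp S' hS'
      exact hcard
    intro B hB
    by_contra hne
    obtain ⟨m', hm'⟩ := Set.nonempty_iff_ne_empty.mpr hne
    have hBΔ : B ∈ Δ ∧ B ∉ Δ.filter (fun C => m ∈ C) := Finset.mem_sdiff.mp hB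
    have hsub : insert B (Δ.filter (fun C => m ∈ C)) ⊆ Δ.filter (fun C => m' ∈ C) := by
      intro C hC
      rcases Finset.mem_insert.mp hC with rfl | hC
      · exact Finset.mem_filter.mpr ⟨hBΔ.1, hm'.1 C (Finset.mem_insert_self _ _)⟩
      · exact Finset.mem_filter.mpr ⟨(Finset.filter_subset _ _) hC,
          hm'.1 C (Finset.mem_insert_of_mem hC)⟩
    have h1 : K + 1 ≤ k m' := by
      have h1' := Finset.card_le_card hsub
      rw [Finset.card_insert_of_notMem hBΔ.2] at h1'
      have h1'' : k m + 1 ≤ k m' := h1'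
      omega
    have h2 : k m' ≤ K := hkK m' hm'.2
    omega
  -- members of any MPS witness give top-count models
  have hD : ∀ S ∈ MPS p Δ, ∀ m ∈ PMod p S, p m ≠ 0 ∧ k m = K := by
    intro S hS m hm
    have hKle : K ≤ S.card := by
      have h0 : (Δ.filter (fun B => mK ∈ B)).card ≤ S.card :=
        hS.2 (Δ.filter (fun B => mK ∈ B)) (hC mK hmKp hmKK).1
      have h0' : k mK ≤ S.card := h0
      omega
    have hsub : S ⊆ Δ.filter (fun B => m ∈ B) := fun B hB =>
      Finset.mem_filter.mpr ⟨hS.1.1 hB, hm.1 B hB⟩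
    have h1 : S.card ≤ k m := Finset.card_le_card hsub
    exact ⟨hm.2, le_antisymm (hkK m hm.2) (le_trans hKle h1)⟩
  -- reformulate the RHS
  have hRHS : (∀ S ∈ MPS p Δ, PMod p S ⊆ PModA p A) ↔
      (∀ m, p m ≠ 0 → k m = K → m ∈ A) := by
    constructor
    · intro hyp m hpm hkm
      exact (hyp _ (hC m hpm hkm) ((hmemSm m).mpr hpm)).1
    · intro hyp S hS m hm
      obtain ⟨h1, h2⟩ := hD S hS m hm
      exact ⟨hyp m h1 h2, h1⟩
  -- analytic part
  have hIoo : ∀ᶠ μ in L, μ ∈ Set.Ioo (0:ℝ) 1 := by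
    have h1 : ∀ᶠ μ in L, μ ∈ Set.Ico (0:ℝ) 1 := eventually_mem_nhdsWithin
    have h2 : ∀ᶠ μ in L, (0:ℝ) < μ :=
      (eventually_gt_nhds (by norm_num : (0:ℝ) < 1)).filter_mono nhdsWithin_le_nhds
    filter_upwards [h1, h2] with μ hμ1 hμ2
    exact ⟨hμ2, hμ1.2⟩
  set w : ℝ → ℝ := fun μ => μ ^ K * (1 - μ) ^ (d - K) with hw
  -- per-term denominator limits
  have hterm : ∀ m : M, Filter.Tendsto (fun μ => ellS μ Δ m * p m / w μ) L
      (nhds (if k m = K then p m else 0)) := by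
    intro m
    rcases eq_or_ne (p m) 0 with hpm | hpm
    · have : (if k m = K then p m else 0) = 0 := by simp [hpm]
      rw [this]
      simpa [hpm] using (tendsto_const_nhds :
        Filter.Tendsto (fun _ : ℝ => (0:ℝ)) L (nhds 0))
    · have hkm : k m ≤ K := hkK m hpm
      have hcont : Filter.Tendsto (fun μ : ℝ => ((1 - μ)/μ) ^ (K - k m) * p m) L
          (nhds (((1 - 1)/1 : ℝ) ^ (K - k m) * p m)) := by
        have : ContinuousAt (fun μ : ℝ => ((1 - μ)/μ) ^ (K - k m) * p m) 1 := by
          exact (((continuousAt_const.sub continuousAt_id).div continuousAt_id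
            one_ne_zero).pow _).mul continuousAt_const
        exact this.tendsto.mono_left nhdsWithin_le_nhds
      have hval : (((1 - 1)/1 : ℝ) ^ (K - k m) * p m) = (if k m = K then p m else 0) := by
        rcases eq_or_ne (k m) K with hke | hke
        · simp [hke]
        · have : K - k m ≠ 0 := by omega
          simp [hke, zero_pow this]
      rw [← hval]
      refine Filter.Tendsto.congr' ?_ hcont
      filter_upwards [hIoo] with μ hμ
      have hμ0 : μ ≠ 0 := ne_of_gt hμ.1
      have h1μ : (1 : ℝ) - μ ≠ 0 := sub_ne_zero.mpr (ne_of_gt hμ.2)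
      have hE : ellS μ Δ m = μ ^ (k m) * (1 - μ) ^ (d - k m) := ellS_eq μ Δ m
      rw [hE]
      simp only [hw]
      have e1 : μ ^ K = μ ^ (k m) * μ ^ (K - k m) := by
        rw [← pow_add]; congr 1; omega
      have e2 : (1 - μ) ^ (d - k m) = (1 - μ) ^ (d - K) * (1 - μ) ^ (K - k m) := by
        rw [← pow_add]; congr 1; omega
      rw [e1, e2, div_pow]
      field_simp
  -- per-term numerator limits
  have hterm2 : ∀ m : M, Filter.Tendsto (fun μ => ell μ A m * ellS μ Δ m * p m / w μ) L
      (nhds (if m ∈ A ∧ k m = K then p m else 0)) := by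
    intro m
    have hid : Filter.Tendsto (fun μ : ℝ => μ) L (nhds 1) :=
      Filter.tendsto_id.mono_left nhdsWithin_le_nhds
    by_cases hmA : m ∈ A
    · have := hid.mul (hterm m)
      rw [one_mul] at this
      have hval : (if m ∈ A ∧ k m = K then p m else 0) = (if k m = K then p m else 0) := by
        simp [hmA]
      rw [hval]
      refine Filter.Tendsto.congr (fun μ => ?_) this
      simp [ell, hmA, mul_div_assoc, mul_assoc]
    · have h1μ : Filter.Tendsto (fun μ : ℝ => 1 - μ) L (nhds 0) := by
        have := (tendsto_const_nhds (x := (1:ℝ)) (f := L)).sub hid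
        simpa using this
      have := h1μ.mul (hterm m)
      rw [zero_mul] at this
      have hval : (if m ∈ A ∧ k m = K then p m else 0) = 0 := by simp [hmA]
      rw [hval]
      refine Filter.Tendsto.congr (fun μ => ?_) this
      simp [ell, hmA, mul_div_assoc, mul_assoc]
  set c : ℝ := ∑ m, (if k m = K then p m else 0) with hc
  set a : ℝ := ∑ m, (if m ∈ A ∧ k m = K then p m else 0) with ha
  have hcpos : 0 < c := by
    refine Finset.sum_pos' (fun m _ => ?_) ⟨mK, Finset.mem_univ _, ?_⟩
    · split <;> simp [hp m]
    · simp only [hmKK, if_pos rfl]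
      exact lt_of_le_of_ne (hp mK) (Ne.symm hmKp)
  have hDen : Filter.Tendsto (fun μ => (∑ m, ellS μ Δ m * p m) / w μ) L (nhds c) := by
    have := tendsto_finset_sum Finset.univ (fun m _ => hterm m)
    refine Filter.Tendsto.congr (fun μ => ?_) this
    rw [Finset.sum_div]
  have hNum : Filter.Tendsto (fun μ => (∑ m, ell μ A m * ellS μ Δ m * p m) / w μ) L
      (nhds a) := by
    have := tendsto_finset_sum Finset.univ (fun m _ => hterm2 m)
    refine Filter.Tendsto.congr (fun μ => ?_) this
    rw [Finset.sum_div]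
  have hcond : Filter.Tendsto (fun μ => condP p μ A Δ) L (nhds (a / c)) := by
    have hdiv := hNum.div hDen (ne_of_gt hcpos)
    refine Filter.Tendsto.congr' ?_ hdiv
    filter_upwards [hIoo] with μ hμ
    have hμ0 : μ ≠ 0 := ne_of_gt hμ.1
    have h1μ : (1 : ℝ) - μ ≠ 0 := sub_ne_zero.mpr (ne_of_gt hμ.2)
    have hwne : w μ ≠ 0 := mul_ne_zero (pow_ne_zero _ hμ0) (pow_ne_zero _ h1μ)
    rw [condP]
    rcases eq_or_ne (∑ m, ellS μ Δ m * p m) 0 with hDz | hDz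
    · simp [hDz]
    · simp only [Pi.div_apply]
      field_simp [hwne, hDz]
  haveI : L.NeBot := by
    refine mem_closure_iff_nhdsWithin_neBot.mp ?_
    rw [closure_Ico (by norm_num : (0:ℝ) ≠ 1)]
    exact ⟨by norm_num, le_refl 1⟩
  rw [hRHS]
  constructor
  · intro htend
    have hac : a / c = 1 := tendsto_nhds_unique hcond htend
    have haeq : a = c := by
      field_simp at hac
      exact hac
    intro m hpm hkm
    by_contra hmA
    have hlt : a < c := by
      refine Finset.sum_lt_sum (fun i _ => ?_) ⟨m, Finset.mem_univ _, ?_⟩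
      · by_cases h1 : i ∈ A ∧ k i = K
        · simp [h1, h1.2]
        · simp only [if_neg h1]
          split <;> simp [hp i]
      · have h1 : ¬ (m ∈ A ∧ k m = K) := fun hc => hmA hc.1
        rw [if_neg h1, if_pos hkm]
        exact lt_of_le_of_ne (hp m) (Ne.symm hpm)
    exact absurd haeq (ne_of_lt hlt)
  · intro hyp
    have haeq : a = c := by
      refine Finset.sum_congr rfl (fun m _ => ?_)
      rcases eq_or_ne (k m) K with hkm | hkm
      · rcases eq_or_ne (p m) 0 with hpm | hpm
        · simp [hpm]
        · simp [hkm, hyp m hpm hkm]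
      · simp [hkm]
    have : a / c = 1 := by rw [haeq, div_self (ne_of_gt hcpos)]
    rw [← this]
    exact hcond
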